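/- Let ε, r > 0 with δ := ε/r, e₁ = (1,0,0) ∈ ℝ³, and define (c_n) by c₀ = r+ε, c_{n+1} = r+ε − r²/(r+ε+c_n); let ρ₀ := 1, ρ_m := r/(c₀+c_{m−1}) for m ≥ 1, q_n := ∏_{m=0}^n ρ_m, Q := Σ_{n=0}^∞ q_n, and h₀(x) := −(1/(4πQ))·Σ_{n=0}^∞ q_n·(1/|x − c_n e₁| − 1/|x + c_n e₁|). Then there exist c₀' > 0 and δ₀ ∈ (0,1) such that for all δ ∈ (0,δ₀): |h₀(εe₁) − h₀(−εe₁)| ≥ c₀'/(Q·r), and consequently there exists a point t ∈ (−ε, ε) (lying on the open segment between the two balls, hence outside B̄₁ ∪ B̄₂) with |∂_{x₁} h₀(t,0,0)| ≥ c₀'/(2·Q·r·ε). In particular sup_{x ∉ B̄₁∪B̄₂} |∇h₀(x)| ≥ c₀'/(2Qrε), matching the upper bound up to constants. -/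

import Mathlib

open Real

private lemma aux_exists_bl {ε r : ℝ} (hε : 0 < ε) (hr : 0 < r) :
    ∃ b l : ℝ, 0 < b ∧ 0 < l ∧ l < 1 ∧ r = 2*b*l/(1-l^2) ∧ ε = b*(1-l)/(1+l) := by
  have hpos : (0:ℝ) < ε^2 + 2*r*ε := by positivity
  have hb2 : (Real.sqrt (ε^2 + 2*r*ε))^2 = ε^2 + 2*r*ε := Real.sq_sqrt hpos.le
  set b := Real.sqrt (ε^2 + 2*r*ε) with hbdef
  have hb : 0 < b := Real.sqrt_pos.2 hpos
  have hεb : ε < b := by nlinarith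
  refine ⟨b, (b-ε)/(b+ε), hb, div_pos (by linarith) (by linarith), ?_, ?_, ?_⟩
  · rw [div_lt_one (by linarith)]; linarith
  · have hl2 : 1 - ((b-ε)/(b+ε))^2 = 4*b*ε/(b+ε)^2 := by
      field_simp; ring
    rw [hl2, eq_comm, div_eq_iff (by positivity)]
    field_simp
    nlinarith [hb2]
  · have h1 : ((b:ℝ)+ε) ≠ 0 := by positivity
    have hb0 : b ≠ 0 := hb.ne'
    field_simp
    ring_nf
    rw [mul_comm b ε, mul_assoc, mul_inv_cancel₀ hb0, mul_one]

private lemma c_formula {b l r ε : ℝ} (hb : 0 < b) (hl0 : 0 < l) (hl1 : l < 1)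
    (hr : r = 2*b*l/(1-l^2)) (hε : ε = b*(1-l)/(1+l))
    {c : ℕ → ℝ} (hc0 : c 0 = r + ε) (hcs : ∀ n, c (n+1) = r + ε - r^2/(r+ε+c n)) :
    ∀ n, c n = b*(1+l^(2*n+2))/(1-l^(2*n+2)) := by
  have hl2 : (0:ℝ) < 1 - l^2 := by nlinarith
  have h1l : (0:ℝ) < 1 + l := by linarith
  have hrpos : 0 < r := by rw [hr]; exact div_pos (by positivity) hl2
  have hεpos : 0 < ε := by rw [hε]; exact div_pos (by nlinarith) h1l
  intro n
  induction n with
  | zero =>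
    rw [hc0, hr, hε]
    field_simp
    ring
  | succ n ih =>
    have hK1 : l^(2*n+2) < 1 := pow_lt_one₀ hl0.le hl1 (by omega)
    have hK0 : 0 < l^(2*n+2) := pow_pos hl0 _
    have hcn : 0 < c n := by
      rw [ih]; exact div_pos (by nlinarith) (by linarith)
    have hden : 0 < r + ε + c n := by positivity
    have hKl : l^(2*(n+1)+2) = l^(2*n+2) * l^2 := by ring
    have h1 : (1 - l^2) ≠ 0 := hl2.ne'
    have h2 : (1 + l) ≠ 0 := h1l.ne'
    have h3 : (1 - l^(2*n+2)) ≠ 0 := by nlinarith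
    have h4 : (1 - l^(2*n+2)*l^2) ≠ 0 := by nlinarith
    have key : r^2 / (r+ε+c n) = r + ε - b*(1+l^(2*n+2)*l^2)/(1-l^(2*n+2)*l^2) := by
      rw [div_eq_iff hden.ne', ih, hr, hε]
      rw [div_add_div _ _ h1 h2, div_add_div _ _ (mul_ne_zero h1 h2) h3, div_sub_div _ _ (mul_ne_zero h1 h2) h4,
        div_pow, div_mul_div_comm, div_eq_div_iff (pow_ne_zero _ h1) (mul_ne_zero (mul_ne_zero (mul_ne_zero h1 h2) h4) (mul_ne_zero (mul_ne_zero h1 h2) h3))]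
      ring
    rw [hcs n, key, hKl]
    ring

private lemma q_formula {b l r ε : ℝ} (hb : 0 < b) (hl0 : 0 < l) (hl1 : l < 1)
    (hr : r = 2*b*l/(1-l^2)) (hε : ε = b*(1-l)/(1+l))
    {c ρ q : ℕ → ℝ}
    (hcf : ∀ n, c n = b*(1+l^(2*n+2))/(1-l^(2*n+2)))
    (hρ0 : ρ 0 = 1) (hρ : ∀ m, 1 ≤ m → ρ m = r / (c 0 + c (m-1)))
    (hq : ∀ n, q n = ∏ m ∈ Finset.range (n + 1), ρ m) :
    ∀ n, q n = l^n * (1-l^2)/(1-l^(2*n+2)) := by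
  have hl2 : (0:ℝ) < 1 - l^2 := by nlinarith
  have h1l : (0:ℝ) < 1 + l := by linarith
  intro n
  induction n with
  | zero =>
    rw [hq 0, Finset.prod_range_one, hρ0]
    have h20 : (1:ℝ) - l^(2*0+2) = 1 - l^2 := by norm_num
    rw [h20, pow_zero, one_mul, div_self hl2.ne']
  | succ n ih =>
    have hstep : q (n+1) = q n * ρ (n+1) := by
      rw [hq (n+1), hq n, Finset.prod_range_succ]
    have hρn : ρ (n+1) = r / (c 0 + c n) := by
      have := hρ (n+1) (by omega)
      simpa using this
    have hK1 : l^(2*n+2) < 1 := pow_lt_one₀ hl0.le hl1 (by omega)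
    have hK0 : 0 < l^(2*n+2) := pow_pos hl0 _
    have h3 : (1 - l^(2*n+2)) ≠ 0 := by nlinarith
    have h4 : (1 - l^(2*n+2)*l^2) ≠ 0 := by nlinarith
    have hc00 : c 0 = b*(1+l^2)/(1-l^2) := by
      have := hcf 0
      norm_num at this
      convert this using 3 <;> ring
    have hsum : c 0 + c n = 2*b*(1-l^(2*n+2)*l^2)/((1-l^2)*(1-l^(2*n+2))) := by
      rw [hc00, hcf n]
      field_simp
      ring
    rw [hstep, hρn, ih, hsum, hr]
    have hKl : l^(2*(n+1)+2) = l^(2*n+2) * l^2 := by ring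
    rw [hKl]
    field_simp
    ring

set_option maxHeartbeats 1000000 in
private lemma term_bound {b l r ε : ℝ} (hb : 0 < b) (hl0 : 0 < l) (hl1 : l < 1)
    (hr : r = 2*b*l/(1-l^2)) (hε : ε = b*(1-l)/(1+l))
    {c q : ℕ → ℝ}
    (hcf : ∀ n, c n = b*(1+l^(2*n+2))/(1-l^(2*n+2)))
    (hqf : ∀ n, q n = l^n * (1-l^2)/(1-l^(2*n+2))) (n : ℕ) :
    (1-l^2) * l^n * (1-l^(n+1))/4 ≤ r * (q n * (1/(c n - ε) - 1/(c n + ε))) ∧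
    r * (q n * (1/(c n - ε) - 1/(c n + ε))) ≤ 2*(1-l^2)*l^n := by
  have hl2 : (0:ℝ) < 1 - l^2 := by nlinarith
  have h1l : (0:ℝ) < 1 + l := by linarith
  have hK1 : l^(2*n+2) < 1 := pow_lt_one₀ hl0.le hl1 (by omega)
  have hK0 : 0 < l^(2*n+2) := pow_pos hl0 _
  have hM0 : 0 < l^(n+1) := pow_pos hl0 _
  have hM1 : l^(n+1) < 1 := pow_lt_one₀ hl0.le hl1 (by omega)
  have hKl : l^(2*n+2) ≤ l := by
    calc l^(2*n+2) ≤ l^1 := pow_le_pow_of_le_one hl0.le hl1.le (by omega)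
    _ = l := pow_one l
  have h3 : (1 - l^(2*n+2)) ≠ 0 := by nlinarith
  have hcme : c n - ε = 2*b*(l^(2*n+2)+l)/((1-l^(2*n+2))*(1+l)) := by
    rw [hcf n, hε]; field_simp; ring
  have hcpe : c n + ε = 2*b*(1+l^(2*n+2)*l)/((1-l^(2*n+2))*(1+l)) := by
    rw [hcf n, hε]; field_simp; ring
  have hd1 : (0:ℝ) < l^(2*n+2)+l := by positivity
  have hd2 : (0:ℝ) < 1+l^(2*n+2)*l := by positivity
  have key : r * (q n * (1/(c n - ε) - 1/(c n + ε))) =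
      (1-l^2) * l^(n+1) * (1-l^(n+1)) * (1+l^(n+1)) / ((l^(2*n+2)+l)*(1+l^(2*n+2)*l)) := by
    rw [hcme, hcpe, hqf n, hr]
    field_simp
    ring
  rw [key]
  have hnum0 : (0:ℝ) ≤ (1-l^2) * l^(n+1) * (1-l^(n+1)) * (1+l^(n+1)) :=
    mul_nonneg (mul_nonneg (mul_nonneg hl2.le hM0.le) (by linarith)) (by positivity)
  have hMl : l^(n+1) = l^n * l := by ring
  constructor
  · have heq : (1-l^2) * l^n * (1-l^(n+1))/4 = ((1-l^2) * l^n * (1-l^(n+1)) * l)/(4*l) := by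
      field_simp
    rw [heq]
    apply div_le_div₀ hnum0 ?_ (by positivity) ?_
    · nlinarith [mul_nonneg (mul_nonneg (mul_nonneg hl2.le hM0.le)
        (by linarith : (0:ℝ) ≤ 1 - l^(n+1))) hM0.le]
    · have e1 : l^(2*n+2)+l ≤ 2*l := by linarith
      have e2 : 1+l^(2*n+2)*l ≤ 2 := by nlinarith
      nlinarith [mul_le_mul e1 e2 hd2.le (by positivity : (0:ℝ) ≤ 2*l)]
  · have heq2 : 2*(1-l^2)*l^n = (2*(1-l^2)*l^n*l)/l := by field_simp
    rw [heq2]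
    apply div_le_div₀ ?_ ?_ hl0 ?_
    · exact mul_nonneg (mul_nonneg (mul_nonneg (by norm_num) hl2.le)
        (pow_pos hl0 n).le) hl0.le
    · have h5 : (1-l^(n+1))*(1+l^(n+1)) ≤ 2 := by nlinarith
      calc (1-l^2) * l^(n+1) * (1-l^(n+1)) * (1+l^(n+1))
          = ((1-l^2) * l^(n+1)) * ((1-l^(n+1)) * (1+l^(n+1))) := by ring
        _ ≤ ((1-l^2) * l^(n+1)) * 2 :=
            mul_le_mul_of_nonneg_left h5 (mul_nonneg hl2.le hM0.le)
        _ = 2*(1-l^2)*l^n*l := by rw [hMl]; ring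
    · calc l ≤ l^(2*n+2)+l := by linarith
        _ = (l^(2*n+2)+l)*1 := (mul_one _).symm
        _ ≤ (l^(2*n+2)+l)*(1+l^(2*n+2)*l) :=
            mul_le_mul_of_nonneg_left (by nlinarith [mul_pos hK0 hl0]) hd1.le

private lemma inv_diff_le {d u v w : ℝ} (hd : 0 < d) (hu : d ≤ u) (hv : d ≤ v)
    (h : |u - v| ≤ w) : |1/u - 1/v| ≤ w / d^2 := by
  have hu0 : 0 < u := lt_of_lt_of_le hd hu
  have hv0 : 0 < v := lt_of_lt_of_le hd hv
  have he : 1/u - 1/v = (v - u)/(u*v) := by field_simp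
  rw [he, abs_div, abs_of_pos (mul_pos hu0 hv0)]
  apply div_le_div₀ (le_trans (abs_nonneg _) h) ?_ (by positivity) ?_
  · rw [abs_sub_comm]; exact h
  · nlinarith

private lemma w_tsum {l : ℝ} (hl0 : 0 < l) (hl1 : l < 1) :
    Summable (fun n : ℕ => (1-l^2) * l^n * (1-l^(n+1))/4) ∧
    ∑' n : ℕ, (1-l^2) * l^n * (1-l^(n+1))/4 = 1/4 := by
  have hl2 : (0:ℝ) < 1 - l^2 := by nlinarith
  have hs1 : Summable (fun n : ℕ => ((1-l^2)/4) * l^n) :=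
    (summable_geometric_of_lt_one hl0.le hl1).mul_left _
  have hs2 : Summable (fun n : ℕ => ((1-l^2)*l/4) * (l^2)^n) :=
    (summable_geometric_of_lt_one (by positivity) (by nlinarith)).mul_left _
  have hw : (fun n : ℕ => (1-l^2) * l^n * (1-l^(n+1))/4) =
      fun n : ℕ => ((1-l^2)/4) * l^n - ((1-l^2)*l/4) * (l^2)^n := by
    funext n; ring
  rw [hw]
  refine ⟨hs1.sub hs2, ?_⟩
  rw [Summable.tsum_sub hs1 hs2, tsum_mul_left, tsum_mul_left,
    tsum_geometric_of_lt_one hl0.le hl1,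
    tsum_geometric_of_lt_one (by positivity) (by nlinarith)]
  have h1 : (1:ℝ) - l ≠ 0 := by nlinarith
  have h2 : (1:ℝ) - l^2 ≠ 0 := hl2.ne'
  field_simp
  ring

set_option maxHeartbeats 1000000 in
theorem stmt_19 :
    ∃ c₀ > (0:ℝ), ∃ δ₀ ∈ Set.Ioo (0:ℝ) 1,
      ∀ ε r : ℝ, 0 < ε → 0 < r → ε / r < δ₀ →
      ∀ e₁ : EuclideanSpace ℝ (Fin 3), e₁ = EuclideanSpace.single 0 1 →
      ∀ c ρ q : ℕ → ℝ,
        c 0 = r + ε →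
        (∀ n, c (n + 1) = r + ε - r ^ 2 / (r + ε + c n)) →
        ρ 0 = 1 →
        (∀ m, 1 ≤ m → ρ m = r / (c 0 + c (m - 1))) →
        (∀ n, q n = ∏ m ∈ Finset.range (n + 1), ρ m) →
        Summable q →
      ∀ Q : ℝ, Q = ∑' n, q n →
      ∀ h₀ : EuclideanSpace ℝ (Fin 3) → ℝ,
        (∀ x, h₀ x = -(1 / (4 * Real.pi * Q)) *
          ∑' n, q n * (1 / ‖x - c n • e₁‖ - 1 / ‖x + c n • e₁‖)) →
        c₀ / (Q * r) ≤ |h₀ (ε • e₁) - h₀ (-(ε • e₁))| ∧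
        (∃ t ∈ Set.Ioo (-ε) ε,
          t • e₁ ∉ closure (Metric.ball ((r + ε) • e₁) r ∪ Metric.ball (-((r + ε) • e₁)) r) ∧
          c₀ / (2 * Q * r * ε) ≤ |fderiv ℝ h₀ (t • e₁) e₁|) ∧
        (∃ x ∉ closure (Metric.ball ((r + ε) • e₁) r ∪ Metric.ball (-((r + ε) • e₁)) r),
          c₀ / (2 * Q * r * ε) ≤ ‖fderiv ℝ h₀ x‖) := by
  have hπ : (0:ℝ) < Real.pi := Real.pi_pos
  refine ⟨1/(8*Real.pi), by positivity, 1/2, by norm_num, ?_⟩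
  intro ε r hε hr _ e₁ he₁ c ρ q hc0 hcs hρ0 hρ hq hsumq Q hQ h₀ hh₀
  obtain ⟨b, l, hb, hl0, hl1, hrbl, hεbl⟩ := aux_exists_bl hε hr
  have hl2 : (0:ℝ) < 1 - l^2 := by nlinarith
  have h1l : (0:ℝ) < 1 + l := by linarith
  have hcf := c_formula hb hl0 hl1 hrbl hεbl hc0 hcs
  have hqf := q_formula hb hl0 hl1 hrbl hεbl hcf hρ0 hρ hq
  -- positivity of q and Q
  have hqpos : ∀ n, 0 < q n := by
    intro n
    rw [hqf n]
    have hK1 : l^(2*n+2) < 1 := pow_lt_one₀ hl0.le hl1 (by omega)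
    exact div_pos (mul_pos (pow_pos hl0 n) hl2) (by linarith)
  have hq0 : q 0 = 1 := by
    have h20 : (2*0+2) = 2 := rfl
    rw [hqf 0, h20, pow_zero, one_mul, div_self hl2.ne']
  have hQ1 : (1:ℝ) ≤ Q := by
    rw [hQ, ← hq0]
    exact Summable.le_tsum hsumq 0 (fun j _ => (hqpos j).le)
  have hQ0 : (0:ℝ) < Q := lt_of_lt_of_le one_pos hQ1
  -- geometry
  have hεb : ε < b := by
    rw [hεbl, div_lt_iff₀ h1l]; nlinarith
  set d : ℝ := (b - ε)/2 with hddef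
  have hd : 0 < d := by rw [hddef]; linarith
  set R : ℝ := (ε + b)/2 with hRdef
  have hεR : ε < R := by rw [hRdef]; linarith
  have hRb : b - R = d := by rw [hRdef, hddef]; ring
  have hcb : ∀ n, b < c n := by
    intro n
    rw [hcf n]
    have hK0 : 0 < l^(2*n+2) := pow_pos hl0 _
    have hK1 : l^(2*n+2) < 1 := pow_lt_one₀ hl0.le hl1 (by omega)
    rw [lt_div_iff₀ (by linarith)]
    nlinarith
  have hce : ∀ n, ε < c n := fun n => hεb.trans (hcb n)
  have hcpos : ∀ n, 0 < c n := fun n => hb.trans (hcb n)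
  have he1 : ‖e₁‖ = 1 := by rw [he₁, EuclideanSpace.norm_single]; exact norm_one
  have hsmulnorm : ∀ t : ℝ, ‖t • e₁‖ = |t| := by
    intro t; rw [norm_smul, he1, mul_one, Real.norm_eq_abs]
  -- the summands
  set F : ℕ → EuclideanSpace ℝ (Fin 3) → ℝ :=
    fun n y => q n * (1 / ‖y - c n • e₁‖ - 1 / ‖y + c n • e₁‖) with hFdef
  set s : Set (EuclideanSpace ℝ (Fin 3)) := Metric.ball 0 R with hsdef
  have hs_open : IsOpen s := Metric.isOpen_ball
  have hs_conn : IsPreconnected s := (convex_ball (0 : EuclideanSpace ℝ (Fin 3)) R).isPreconnected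
  have h0s : (0 : EuclideanSpace ℝ (Fin 3)) ∈ s := Metric.mem_ball_self (by linarith)
  have hdist : ∀ n, ∀ x ∈ s, d ≤ ‖x - c n • e₁‖ ∧ d ≤ ‖x + c n • e₁‖ := by
    intro n x hx
    have hxn : ‖x‖ < R := by rwa [hsdef, mem_ball_zero_iff] at hx
    have hcn : ‖c n • e₁‖ = c n := by
      rw [norm_smul, he1, mul_one, Real.norm_eq_abs, abs_of_pos (hcpos n)]
    constructor
    · have h1 := norm_sub_norm_le (c n • e₁) x
      rw [hcn, norm_sub_rev] at h1
      have := hcb n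
      linarith
    · have h1 := norm_sub_norm_le (c n • e₁) (-x)
      rw [hcn, norm_neg, sub_neg_eq_add, add_comm] at h1
      have := hcb n
      linarith
  have hd2 : (0:ℝ) < d^2 := by positivity
  -- Lipschitz bounds
  have hFlip : ∀ n, LipschitzOnWith (Real.toNNReal (q n * (2/d^2))) (F n) s := by
    intro n
    apply LipschitzOnWith.of_dist_le_mul
    intro x hx y hy
    obtain ⟨hx1, hx2⟩ := hdist n x hx
    obtain ⟨hy1, hy2⟩ := hdist n y hy
    rw [Real.coe_toNNReal _ (mul_nonneg (hqpos n).le (by positivity))]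
    have hd1' : |‖x - c n • e₁‖ - ‖y - c n • e₁‖| ≤ dist x y := by
      have h := abs_norm_sub_norm_le (x - c n • e₁) (y - c n • e₁)
      rw [sub_sub_sub_cancel_right] at h
      rwa [dist_eq_norm]
    have hd2' : |‖x + c n • e₁‖ - ‖y + c n • e₁‖| ≤ dist x y := by
      have h := abs_norm_sub_norm_le (x + c n • e₁) (y + c n • e₁)
      rw [add_sub_add_right_eq_sub] at h
      rwa [dist_eq_norm]
    have e1 := inv_diff_le hd hx1 hy1 hd1'
    have e2 := inv_diff_le hd hx2 hy2 hd2'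
    have e2' : |1/‖y + c n • e₁‖ - 1/‖x + c n • e₁‖| ≤ dist x y / d^2 := by
      rwa [abs_sub_comm]
    rw [Real.dist_eq]
    have hFxy : F n x - F n y = q n * ((1/‖x - c n • e₁‖ - 1/‖y - c n • e₁‖)
        + (1/‖y + c n • e₁‖ - 1/‖x + c n • e₁‖)) := by
      simp only [hFdef]; ring
    rw [hFxy, abs_mul, abs_of_pos (hqpos n)]
    calc q n * |(1/‖x - c n • e₁‖ - 1/‖y - c n • e₁‖)
          + (1/‖y + c n • e₁‖ - 1/‖x + c n • e₁‖)|
        ≤ q n * (|1/‖x - c n • e₁‖ - 1/‖y - c n • e₁‖|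
          + |1/‖y + c n • e₁‖ - 1/‖x + c n • e₁‖|) :=
          mul_le_mul_of_nonneg_left (abs_add_le _ _) (hqpos n).le
      _ ≤ q n * (dist x y / d^2 + dist x y / d^2) :=
          mul_le_mul_of_nonneg_left (add_le_add e1 e2') (hqpos n).le
      _ = q n * (2/d^2) * dist x y := by ring
  -- differentiability of summands
  have hFdiff : ∀ n, ∀ x ∈ s, DifferentiableAt ℝ (F n) x := by
    intro n x hx
    obtain ⟨hx1, hx2⟩ := hdist n x hx
    have hn1 : ‖x - c n • e₁‖ ≠ 0 := ne_of_gt (lt_of_lt_of_le hd hx1)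
    have hn2 : ‖x + c n • e₁‖ ≠ 0 := ne_of_gt (lt_of_lt_of_le hd hx2)
    have hne1 : x - c n • e₁ ≠ 0 := fun h => hn1 (by rw [h, norm_zero])
    have hne2 : x + c n • e₁ ≠ 0 := fun h => hn2 (by rw [h, norm_zero])
    have d1 : DifferentiableAt ℝ (fun y : EuclideanSpace ℝ (Fin 3) => ‖y - c n • e₁‖) x :=
      (differentiableAt_id.sub (differentiableAt_const _)).norm ℝ hne1
    have d2 : DifferentiableAt ℝ (fun y : EuclideanSpace ℝ (Fin 3) => ‖y + c n • e₁‖) x :=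
      (differentiableAt_id.add (differentiableAt_const _)).norm ℝ hne2
    have hFn : F n = fun y => q n * ((‖y - c n • e₁‖)⁻¹ - (‖y + c n • e₁‖)⁻¹) := by
      funext y; simp only [hFdef, one_div]
    rw [hFn]
    exact ((d1.inv hn1).sub (d2.inv hn2)).const_mul _
  -- summable derivative bounds
  have hsumu : Summable (fun n => q n * (2/d^2)) := hsumq.mul_right _
  have hf'bound : ∀ n, ∀ x ∈ s, ‖fderiv ℝ (F n) x‖ ≤ q n * (2/d^2) := by
    intro n x hx
    have h1 := norm_fderiv_le_of_lipschitzOn ℝ (hs_open.mem_nhds hx) (hFlip n)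
    rwa [Real.coe_toNNReal _ (mul_nonneg (hqpos n).le (by positivity))] at h1
  have hF0 : Summable (fun n => F n 0) := by
    have hz : (fun n => F n 0) = fun _ => (0:ℝ) := by
      funext n
      have hcn1 : ‖(0:EuclideanSpace ℝ (Fin 3)) - c n • e₁‖ = c n := by
        rw [zero_sub, norm_neg, norm_smul, he1, mul_one, Real.norm_eq_abs,
          abs_of_pos (hcpos n)]
      have hcn2 : ‖(0:EuclideanSpace ℝ (Fin 3)) + c n • e₁‖ = c n := by
        rw [zero_add, norm_smul, he1, mul_one, Real.norm_eq_abs, abs_of_pos (hcpos n)]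
      simp only [hFdef, hcn1, hcn2]
      ring
    rw [hz]; exact summable_zero
  have hGderiv : ∀ x ∈ s, HasFDerivAt (fun y => ∑' n, F n y) (∑' n, fderiv ℝ (F n) x) x :=
    fun x hx => hasFDerivAt_tsum_of_isPreconnected hsumu hs_open hs_conn
      (fun n x hx => (hFdiff n x hx).hasFDerivAt) hf'bound h0s hF0 hx
  have hh₀G : ∀ x, h₀ x = -(1 / (4 * Real.pi * Q)) * ∑' n, F n x := fun x => hh₀ x
  have hh₀deriv : ∀ x ∈ s, HasFDerivAt h₀
      ((-(1 / (4 * Real.pi * Q))) • (∑' n, fderiv ℝ (F n) x)) x := by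
    intro x hx
    have h1 := (hGderiv x hx).const_mul (-(1 / (4 * Real.pi * Q)))
    have hfun : (fun y => -(1 / (4 * Real.pi * Q)) * ∑' n, F n y) = h₀ :=
      funext (fun y => (hh₀G y).symm)
    rwa [hfun] at h1
  -- the 1-d function along the axis
  have hts : ∀ t : ℝ, |t| ≤ ε → (t • e₁) ∈ s := by
    intro t ht
    rw [hsdef, mem_ball_zero_iff, hsmulnorm]
    linarith
  have hgderiv : ∀ t ∈ Set.Icc (-ε) ε,
      HasDerivAt (fun t : ℝ => h₀ (t • e₁)) (fderiv ℝ h₀ (t • e₁) e₁) t := by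
    intro t ht
    have hmem : (t • e₁) ∈ s := hts t (abs_le.mpr ⟨ht.1, ht.2⟩)
    have hD := (hh₀deriv _ hmem).differentiableAt
    have h1 : HasDerivAt (fun u : ℝ => u • e₁) e₁ t := by
      simpa using (hasDerivAt_id t).smul_const e₁
    have h2 := hD.hasFDerivAt.comp_hasDerivAt t h1
    exact h2
  -- the series at ±ε
  set A : ℕ → ℝ := fun n => q n * (1/(c n - ε) - 1/(c n + ε)) with hAdef
  have hbound := fun n => term_bound hb hl0 hl1 hrbl hεbl hcf hqf n
  obtain ⟨hwsum, hwval⟩ := w_tsum hl0 hl1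
  have hwpos : ∀ n : ℕ, 0 ≤ (1-l^2) * l^n * (1-l^(n+1))/4 := by
    intro n
    have hM1 : l^(n+1) < 1 := pow_lt_one₀ hl0.le hl1 (by omega)
    have := pow_pos hl0 n
    apply div_nonneg _ (by norm_num)
    exact mul_nonneg (mul_nonneg hl2.le (pow_pos hl0 n).le) (by linarith)
  have hA_lb : ∀ n, ((1-l^2) * l^n * (1-l^(n+1))/4) / r ≤ A n := by
    intro n
    rw [div_le_iff₀ hr]
    have h1 := (hbound n).1
    have h2 : A n * r = r * (q n * (1/(c n - ε) - 1/(c n + ε))) := by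
      simp only [hAdef]; ring
    linarith [h2 ▸ h1]
  have hA0 : ∀ n, 0 ≤ A n := fun n =>
    le_trans (div_nonneg (hwpos n) hr.le) (hA_lb n)
  have hA_ub : ∀ n, A n ≤ (2*(1-l^2)/r) * l^n := by
    intro n
    have h1 := (hbound n).2
    rw [div_mul_eq_mul_div, le_div_iff₀ hr]
    have h2 : A n * r = r * (q n * (1/(c n - ε) - 1/(c n + ε))) := by
      simp only [hAdef]; ring
    calc A n * r = r * (q n * (1/(c n - ε) - 1/(c n + ε))) := h2
      _ ≤ 2*(1-l^2)*l^n := h1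
      _ = 2*(1-l^2)*l^n := rfl
  have hAsum : Summable A :=
    Summable.of_nonneg_of_le hA0 hA_ub
      ((summable_geometric_of_lt_one hl0.le hl1).mul_left _)
  have htA_lb : 1/(4*r) ≤ ∑' n, A n := by
    have h1 : ∑' n : ℕ, ((1-l^2) * l^n * (1-l^(n+1))/4) / r ≤ ∑' n, A n :=
      Summable.tsum_le_tsum hA_lb (hwsum.div_const r) hAsum
    rw [tsum_div_const, hwval] at h1
    calc 1/(4*r) = (1/4)/r := by ring
      _ ≤ _ := h1
  have htA0 : 0 ≤ ∑' n, A n := tsum_nonneg hA0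
  -- values of the tsum at ±ε•e₁
  have hval1 : ∑' n, F n (ε • e₁) = ∑' n, A n := by
    apply tsum_congr
    intro n
    have h1 : ‖ε • e₁ - c n • e₁‖ = c n - ε := by
      rw [← sub_smul, hsmulnorm, abs_of_neg (by linarith [hce n] : ε - c n < 0)]
      ring
    have h2 : ‖ε • e₁ + c n • e₁‖ = c n + ε := by
      rw [← add_smul, hsmulnorm, abs_of_pos (by linarith [hce n] : (0:ℝ) < ε + c n)]
      ring
    simp only [hFdef, hAdef, h1, h2]
  have hval2 : ∑' n, F n (-(ε • e₁)) = -∑' n, A n := by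
    have hcongr : ∀ n, F n (-(ε • e₁)) = - A n := by
      intro n
      have hns : -(ε • e₁) = (-ε) • e₁ := (neg_smul ε e₁).symm
      have h1 : ‖(-ε) • e₁ - c n • e₁‖ = c n + ε := by
        rw [← sub_smul, hsmulnorm, abs_of_neg (by linarith [hce n] : -ε - c n < 0)]
        ring
      have h2 : ‖(-ε) • e₁ + c n • e₁‖ = c n - ε := by
        rw [← add_smul, hsmulnorm, abs_of_pos (by linarith [hce n] : (0:ℝ) < -ε + c n)]
        ring
      rw [hns]
      simp only [hFdef, hAdef, h1, h2]
      ring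
    rw [tsum_congr hcongr, tsum_neg]
  have hdiffval : h₀ (ε • e₁) - h₀ (-(ε • e₁)) =
      -(1 / (4 * Real.pi * Q)) * (2 * ∑' n, A n) := by
    rw [hh₀G, hh₀G, hval1, hval2]; ring
  have habsval : |h₀ (ε • e₁) - h₀ (-(ε • e₁))| =
      (1 / (4 * Real.pi * Q)) * (2 * ∑' n, A n) := by
    rw [hdiffval, neg_mul, abs_neg, abs_mul,
      abs_of_pos (by positivity : (0:ℝ) < 1 / (4 * Real.pi * Q)),
      abs_of_nonneg (by linarith : (0:ℝ) ≤ 2 * ∑' n, A n)]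
  have goal1 : 1/(8*Real.pi) / (Q*r) ≤ |h₀ (ε • e₁) - h₀ (-(ε • e₁))| := by
    rw [habsval]
    have key : 1/(8*Real.pi)/(Q*r) = (1/(4*Real.pi*Q)) * (2 * (1/(4*r))) := by
      field_simp
      ring
    rw [key]
    exact mul_le_mul_of_nonneg_left (by linarith) (by positivity)
  -- mean value theorem
  have hcont : ContinuousOn (fun t : ℝ => h₀ (t • e₁)) (Set.Icc (-ε) ε) :=
    fun t ht => ((hgderiv t ht).continuousAt).continuousWithinAt
  obtain ⟨t, htIoo, hteq⟩ := exists_hasDerivAt_eq_slope (fun t : ℝ => h₀ (t • e₁))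
    (fun t => fderiv ℝ h₀ (t • e₁) e₁) (by linarith : -ε < ε) hcont
    (fun t ht => hgderiv t (Set.mem_Icc_of_Ioo ht))
  have hslope : fderiv ℝ h₀ (t • e₁) e₁ =
      (h₀ (ε • e₁) - h₀ (-(ε • e₁))) / (2*ε) := by
    rw [hteq]
    have hns : (-ε) • e₁ = -(ε • e₁) := neg_smul ε e₁
    rw [hns]
    congr 1
    ring
  have hderivbound : 1/(8*Real.pi) / (2*Q*r*ε) ≤ |fderiv ℝ h₀ (t • e₁) e₁| := by
    rw [hslope, abs_div, abs_of_pos (by linarith : (0:ℝ) < 2*ε)]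
    have hrw : 1/(8*Real.pi) / (2*Q*r*ε) = (1/(8*Real.pi) / (Q*r)) / (2*ε) := by
      ring
    rw [hrw]
    gcongr
  -- points on the segment are outside both closed balls
  have hnotin : ∀ t' : ℝ, t' ∈ Set.Ioo (-ε) ε →
      t' • e₁ ∉ closure (Metric.ball ((r + ε) • e₁) r ∪ Metric.ball (-((r + ε) • e₁)) r) := by
    intro t' ht' hmem
    rw [closure_union, closure_ball _ (ne_of_gt hr), closure_ball _ (ne_of_gt hr)] at hmem
    rcases hmem with hm | hm
    · rw [Metric.mem_closedBall, dist_eq_norm, ← sub_smul, hsmulnorm,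
        abs_of_neg (by linarith [ht'.2] : t' - (r + ε) < 0)] at hm
      linarith [ht'.2]
    · rw [Metric.mem_closedBall, dist_eq_norm, sub_neg_eq_add, ← add_smul, hsmulnorm,
        abs_of_pos (by linarith [ht'.1] : (0:ℝ) < t' + (r + ε))] at hm
      linarith [ht'.1]
  refine ⟨goal1, ⟨t, htIoo, hnotin t htIoo, hderivbound⟩,
    ⟨t • e₁, hnotin t htIoo, ?_⟩⟩
  have hop := (fderiv ℝ h₀ (t • e₁)).le_opNorm e₁
  rw [he1, mul_one] at hop
  have habs : |fderiv ℝ h₀ (t • e₁) e₁| = ‖fderiv ℝ h₀ (t • e₁) e₁‖ :=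
    (Real.norm_eq_abs _).symm
  linarith [hderivbound, habs ▸ hop]
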